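/- Under the same setup as the subsequence convergence theorem — X ∈ ℝ^{n×d}, L ∈ ℝ^{n×n} symmetric positive semidefinite, μ > 0 with Xᵀ L X ≠ 0, β > 0, f(W,H) = (1/2)‖X − X W H‖_F² + (μ/2)Tr(Wᵀ Xᵀ L X W), g_β(W) = β·Σ_i ‖W_{i·}‖₂, and sequences (W^k, H^k) with W^k ≥ 0 satisfying, for all k: W^{k+1} minimizes over W ≥ 0 the map W ↦ Tr(G_kᵀ(W − W^k)) + (L_w^k/2)‖W − W^k‖_F² + g_β(W) with G_k = Xᵀ(X W^k H^k − X)(H^k)ᵀ + μ Xᵀ L X W^k and L_w^k = ‖H^k(H^k)ᵀ‖₂‖XᵀX‖₂ + μ‖Xᵀ L X‖₂, and H^{k+1} minimizes H ↦ f(W^{k+1}, H) — the sequence {W^k} is bounded; in particular β·Σ_{i=1}^d ‖W^k_{i·}‖₂ ≤ f(W⁰,H⁰) + g_β(W⁰) for every k ≥ 0. -/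

import Mathlib

open scoped BigOperators
open Matrix Filter Topology

/-- Squared Frobenius norm of a matrix. -/
noncomputable def frobSq {m p : Type*} [Fintype m] [Fintype p]
    (A : Matrix m p ℝ) : ℝ :=
  ∑ i, ∑ j, (A i j) ^ 2

/-- Frobenius norm of a matrix. -/
noncomputable def frobNorm {m p : Type*} [Fintype m] [Fintype p]
    (A : Matrix m p ℝ) : ℝ :=
  Real.sqrt (frobSq A)

/-- Spectral norm (largest singular value) of a matrix: its operator norm as a
linear map between Euclidean spaces. -/
noncomputable def specNorm {m p : ℕ} (A : Matrix (Fin m) (Fin p) ℝ) : ℝ :=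
  ‖LinearMap.toContinuousLinearMap (Matrix.toEuclideanLin A)‖

/-- The smooth part of the GLoSS objective:
`f(W,H) = (1/2)‖X − XWH‖_F² + (μ/2)Tr(WᵀXᵀLXW)`. -/
noncomputable def fobj {n d K : ℕ} (X : Matrix (Fin n) (Fin d) ℝ)
    (L : Matrix (Fin n) (Fin n) ℝ) (μ : ℝ)
    (W : Matrix (Fin d) (Fin K) ℝ) (H : Matrix (Fin K) (Fin d) ℝ) : ℝ :=
  (1 / 2) * frobSq (X - X * W * H) + (μ / 2) * Matrix.trace (Wᵀ * Xᵀ * L * X * W)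

/-- The group-lasso regularizer `g_β(W) = β Σᵢ ‖Wᵢ·‖₂` (sum of Euclidean norms of rows). -/
noncomputable def gbeta {d K : ℕ} (β : ℝ) (W : Matrix (Fin d) (Fin K) ℝ) : ℝ :=
  β * ∑ i, Real.sqrt (∑ j, (W i j) ^ 2)

/-- The partial gradient `∇_W f(W,H) = Xᵀ(XWH − X)Hᵀ + μXᵀLXW`. -/
noncomputable def Gmat {n d K : ℕ} (X : Matrix (Fin n) (Fin d) ℝ)
    (L : Matrix (Fin n) (Fin n) ℝ) (μ : ℝ)
    (W : Matrix (Fin d) (Fin K) ℝ) (H : Matrix (Fin K) (Fin d) ℝ) :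
    Matrix (Fin d) (Fin K) ℝ :=
  Xᵀ * (X * W * H - X) * Hᵀ + μ • (Xᵀ * L * X * W)

/-- The Lipschitz constant `L_w = ‖HHᵀ‖₂‖XᵀX‖₂ + μ‖XᵀLX‖₂`. -/
noncomputable def Lw {n d K : ℕ} (X : Matrix (Fin n) (Fin d) ℝ)
    (L : Matrix (Fin n) (Fin n) ℝ) (μ : ℝ) (H : Matrix (Fin K) (Fin d) ℝ) : ℝ :=
  specNorm (H * Hᵀ) * specNorm (Xᵀ * X) + μ * specNorm (Xᵀ * L * X)

/-- The prox-linearized surrogate minimized at each `W`-update: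
`W' ↦ ⟨∇_W f(Wk,Hk), W' − Wk⟩ + (L_w/2)‖W' − Wk‖_F² + g_β(W')`. -/
noncomputable def Qsurr {n d K : ℕ} (X : Matrix (Fin n) (Fin d) ℝ)
    (L : Matrix (Fin n) (Fin n) ℝ) (μ β : ℝ)
    (Wk : Matrix (Fin d) (Fin K) ℝ) (Hk : Matrix (Fin K) (Fin d) ℝ)
    (W' : Matrix (Fin d) (Fin K) ℝ) : ℝ :=
  Matrix.trace ((Gmat X L μ Wk Hk)ᵀ * (W' - Wk)) +
    (Lw X L μ Hk / 2) * frobSq (W' - Wk) + gbeta β W'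


section Helpers

open Matrix

lemma specNorm_nonneg {m p : ℕ} (A : Matrix (Fin m) (Fin p) ℝ) : 0 ≤ specNorm A :=
  norm_nonneg _

lemma dot_mulVec_le {m : ℕ} (A : Matrix (Fin m) (Fin m) ℝ) (v : Fin m → ℝ) :
    v ⬝ᵥ (A *ᵥ v) ≤ specNorm A * ∑ i, (v i) ^ 2 := by
  set x : EuclideanSpace ℝ (Fin m) := (WithLp.equiv 2 _).symm v with hx
  have hxnorm : ‖x‖ ^ 2 = ∑ i, (v i) ^ 2 := by
    rw [EuclideanSpace.norm_eq, Real.sq_sqrt (by positivity)]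
    simp [hx, sq_abs]
  have hinner : (inner ℝ x ((Matrix.toEuclideanLin A) x) : ℝ) = v ⬝ᵥ (A *ᵥ v) := by
    rw [EuclideanSpace.inner_eq_star_dotProduct]
    simp [Matrix.toEuclideanLin_apply, hx, dotProduct_comm]
  have hb : ‖(Matrix.toEuclideanLin A) x‖ ≤ specNorm A * ‖x‖ := by
    simpa only [specNorm, LinearMap.coe_toContinuousLinearMap'] using
      (LinearMap.toContinuousLinearMap (Matrix.toEuclideanLin A)).le_opNorm x
  calc v ⬝ᵥ (A *ᵥ v) = inner ℝ x ((Matrix.toEuclideanLin A) x) := hinner.symm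
    _ ≤ ‖x‖ * ‖(Matrix.toEuclideanLin A) x‖ := real_inner_le_norm _ _
    _ ≤ ‖x‖ * (specNorm A * ‖x‖) := mul_le_mul_of_nonneg_left hb (norm_nonneg x)
    _ = specNorm A * ‖x‖ ^ 2 := by ring
    _ = _ := by rw [hxnorm]

lemma frobSq_nonneg {m p : Type*} [Fintype m] [Fintype p] (A : Matrix m p ℝ) :
    0 ≤ frobSq A := by
  apply Finset.sum_nonneg; intro i _; positivity

lemma frobSq_transpose {m p : Type*} [Fintype m] [Fintype p] (A : Matrix m p ℝ) :
    frobSq Aᵀ = frobSq A := by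
  rw [frobSq, Finset.sum_comm]; rfl

lemma frobSq_sub {m p : Type*} [Fintype m] [Fintype p] (A B : Matrix m p ℝ) :
    frobSq (A - B) = frobSq A - 2 * Matrix.trace (Aᵀ * B) + frobSq B := by
  have ht : Matrix.trace (Aᵀ * B) = ∑ i, ∑ j, A i j * B i j := by
    rw [Matrix.trace]
    simp only [Matrix.diag, Matrix.mul_apply, Matrix.transpose_apply]
    exact Finset.sum_comm
  simp only [frobSq, Matrix.sub_apply, ht, Finset.mul_sum, ← Finset.sum_sub_distrib,
    ← Finset.sum_add_distrib]
  apply Finset.sum_congr rfl; intro i _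
  apply Finset.sum_congr rfl; intro j _
  ring

lemma frobSq_mul_le_left {n m p : ℕ} (A : Matrix (Fin n) (Fin m) ℝ)
    (B : Matrix (Fin m) (Fin p) ℝ) :
    frobSq (A * B) ≤ specNorm (Aᵀ * A) * frobSq B := by
  have e1 : frobSq (A * B) = ∑ j, ∑ i, ((A * B) i j) ^ 2 := by
    rw [frobSq]; exact Finset.sum_comm
  have e2 : frobSq B = ∑ j, ∑ k, (B k j) ^ 2 := by
    rw [frobSq]; exact Finset.sum_comm
  rw [e1, e2, Finset.mul_sum]
  apply Finset.sum_le_sum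
  intro j _
  set v : Fin m → ℝ := fun k => B k j with hv
  have h1 : ∑ i, ((A * B) i j) ^ 2 = (A *ᵥ v) ⬝ᵥ (A *ᵥ v) := by
    simp only [dotProduct, Matrix.mul_apply, Matrix.mulVec, hv, sq]
  have h2 : (A *ᵥ v) ⬝ᵥ (A *ᵥ v) = v ⬝ᵥ ((Aᵀ * A) *ᵥ v) := by
    rw [← Matrix.mulVec_mulVec, Matrix.dotProduct_mulVec v, Matrix.vecMul_transpose]
  rw [h1, h2]
  exact dot_mulVec_le _ _

lemma frobSq_mul_le_right {n m p : ℕ} (A : Matrix (Fin n) (Fin m) ℝ)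
    (B : Matrix (Fin m) (Fin p) ℝ) :
    frobSq (A * B) ≤ specNorm (B * Bᵀ) * frobSq A := by
  have := frobSq_mul_le_left Bᵀ Aᵀ
  rw [← Matrix.transpose_mul, frobSq_transpose, frobSq_transpose,
    Matrix.transpose_transpose] at this
  exact this

lemma trace_quad_le {m p : ℕ} (A : Matrix (Fin m) (Fin m) ℝ)
    (D : Matrix (Fin m) (Fin p) ℝ) :
    Matrix.trace (Dᵀ * A * D) ≤ specNorm A * frobSq D := by
  have e2 : frobSq D = ∑ j, ∑ k, (D k j) ^ 2 := by
    rw [frobSq]; exact Finset.sum_comm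
  rw [Matrix.trace, e2, Finset.mul_sum]
  apply Finset.sum_le_sum
  intro j _
  set v : Fin m → ℝ := fun k => D k j with hv
  have h1 : (Dᵀ * A * D).diag j = v ⬝ᵥ (A *ᵥ v) := by
    rw [Matrix.mul_assoc]
    simp only [Matrix.diag, Matrix.mul_apply, Matrix.transpose_apply, dotProduct,
      Matrix.mulVec, hv]
  rw [h1]
  calc v ⬝ᵥ (A *ᵥ v) ≤ specNorm A * ∑ i, (v i) ^ 2 := dot_mulVec_le _ _
    _ = specNorm A * ∑ i, (D i j) ^ 2 := rfl

lemma trace_quad_nonneg {m p : Type*} [Fintype m] [Fintype p]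
    {A : Matrix m m ℝ} (hA : A.PosSemidef) (D : Matrix m p ℝ) :
    0 ≤ Matrix.trace (Dᵀ * A * D) := by
  rw [Matrix.trace]
  apply Finset.sum_nonneg
  intro j _
  set v : m → ℝ := fun k => D k j with hv
  have h1 : (Dᵀ * A * D).diag j = v ⬝ᵥ (A *ᵥ v) := by
    rw [Matrix.mul_assoc]
    simp only [Matrix.diag, Matrix.mul_apply, Matrix.transpose_apply, dotProduct,
      Matrix.mulVec, hv]
  rw [h1]
  simpa using hA.dotProduct_mulVec_nonneg v

lemma trace_sym {a b : Type*} [Fintype a] [Fintype b] {M : Matrix a a ℝ} (hM : Mᵀ = M)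
    (P Q : Matrix a b ℝ) : Matrix.trace (Qᵀ * M * P) = Matrix.trace (Pᵀ * M * Q) := by
  rw [← Matrix.trace_transpose (Qᵀ * M * P), Matrix.transpose_mul, Matrix.transpose_mul,
    Matrix.transpose_transpose, hM, Matrix.mul_assoc]

lemma fobj_expand {n d K : ℕ} (X : Matrix (Fin n) (Fin d) ℝ) (L : Matrix (Fin n) (Fin n) ℝ)
    (hLs : Lᵀ = L) (μ : ℝ) (Wk W' : Matrix (Fin d) (Fin K) ℝ) (H : Matrix (Fin K) (Fin d) ℝ) :
    fobj X L μ W' H = fobj X L μ Wk H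
      + Matrix.trace ((Gmat X L μ Wk H)ᵀ * (W' - Wk))
      + (1 / 2) * frobSq (X * (W' - Wk) * H)
      + (μ / 2) * Matrix.trace ((W' - Wk)ᵀ * (Xᵀ * L * X) * (W' - Wk)) := by
  have hMs : (Xᵀ * L * X)ᵀ = Xᵀ * L * X := by
    rw [Matrix.transpose_mul, Matrix.transpose_mul, Matrix.transpose_transpose, hLs,
      Matrix.mul_assoc]
  have hgroup : ∀ P Q : Matrix (Fin d) (Fin K) ℝ,
      Pᵀ * Xᵀ * L * X * Q = Pᵀ * (Xᵀ * L * X) * Q := by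
    intro P Q; simp only [Matrix.mul_assoc]
  have key1 : X - X * W' * H = (X - X * Wk * H) - X * (W' - Wk) * H := by
    rw [Matrix.mul_sub X W' Wk, Matrix.sub_mul]; abel
  have key2 : frobSq (X - X * W' * H)
      = frobSq (X - X * Wk * H)
        - 2 * Matrix.trace ((X - X * Wk * H)ᵀ * (X * (W' - Wk) * H))
        + frobSq (X * (W' - Wk) * H) := by
    rw [key1, frobSq_sub]
  have claim : ∀ S : Matrix (Fin n) (Fin d) ℝ,
      Matrix.trace ((Xᵀ * S * Hᵀ)ᵀ * (W' - Wk))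
        = Matrix.trace (Sᵀ * (X * (W' - Wk) * H)) := by
    intro S
    rw [Matrix.transpose_mul, Matrix.transpose_mul, Matrix.transpose_transpose,
      Matrix.transpose_transpose, Matrix.mul_assoc H, Matrix.trace_mul_comm]
    simp only [Matrix.mul_assoc]
  have key3 : Matrix.trace ((Gmat X L μ Wk H)ᵀ * (W' - Wk))
      = - Matrix.trace ((X - X * Wk * H)ᵀ * (X * (W' - Wk) * H))
        + μ * Matrix.trace (Wkᵀ * (Xᵀ * L * X) * (W' - Wk)) := by
    rw [Gmat, Matrix.transpose_add, Matrix.add_mul, Matrix.trace_add, Matrix.transpose_smul,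
      Matrix.smul_mul, Matrix.trace_smul]
    congr 1
    · have h4 : X * Wk * H - X = -(X - X * Wk * H) := by abel
      rw [h4, claim, Matrix.transpose_neg, Matrix.neg_mul, Matrix.trace_neg]
    · rw [Matrix.transpose_mul, hMs, smul_eq_mul]
  have key4 : Matrix.trace (W'ᵀ * (Xᵀ * L * X) * W')
      = Matrix.trace (Wkᵀ * (Xᵀ * L * X) * Wk)
        + 2 * Matrix.trace (Wkᵀ * (Xᵀ * L * X) * (W' - Wk))
        + Matrix.trace ((W' - Wk)ᵀ * (Xᵀ * L * X) * (W' - Wk)) := by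
    have hW' : W' = Wk + (W' - Wk) := by abel
    nth_rewrite 1 [hW']
    nth_rewrite 2 [hW']
    simp only [Matrix.transpose_add, Matrix.add_mul, Matrix.mul_add, Matrix.trace_add]
    rw [trace_sym hMs Wk (W' - Wk)]
    ring
  rw [fobj, fobj, hgroup W' W', hgroup Wk Wk, key2, key3, key4]
  ring

lemma descent_lemma {n d K : ℕ} (X : Matrix (Fin n) (Fin d) ℝ) (L : Matrix (Fin n) (Fin n) ℝ)
    (hLs : Lᵀ = L) {μ : ℝ} (hμ : 0 ≤ μ) (Wk W' : Matrix (Fin d) (Fin K) ℝ)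
    (H : Matrix (Fin K) (Fin d) ℝ) :
    fobj X L μ W' H ≤ fobj X L μ Wk H
      + Matrix.trace ((Gmat X L μ Wk H)ᵀ * (W' - Wk))
      + (Lw X L μ H / 2) * frobSq (W' - Wk) := by
  rw [fobj_expand X L hLs μ Wk W' H, Lw]
  have h1 : frobSq (X * (W' - Wk) * H)
      ≤ specNorm (H * Hᵀ) * (specNorm (Xᵀ * X) * frobSq (W' - Wk)) := by
    calc frobSq (X * (W' - Wk) * H) ≤ specNorm (H * Hᵀ) * frobSq (X * (W' - Wk)) :=
          frobSq_mul_le_right _ _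
      _ ≤ _ := mul_le_mul_of_nonneg_left (frobSq_mul_le_left X _) (specNorm_nonneg _)
  have h2 : Matrix.trace ((W' - Wk)ᵀ * (Xᵀ * L * X) * (W' - Wk))
      ≤ specNorm (Xᵀ * L * X) * frobSq (W' - Wk) := trace_quad_le _ _
  have h4 : (μ / 2) * Matrix.trace ((W' - Wk)ᵀ * (Xᵀ * L * X) * (W' - Wk))
      ≤ (μ / 2) * (specNorm (Xᵀ * L * X) * frobSq (W' - Wk)) :=
    mul_le_mul_of_nonneg_left h2 (by positivity)
  nlinarith [h1, h4]

lemma fobj_nonneg {n d K : ℕ} (X : Matrix (Fin n) (Fin d) ℝ) {L : Matrix (Fin n) (Fin n) ℝ}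
    (hL : L.PosSemidef) {μ : ℝ} (hμ : 0 ≤ μ) (W : Matrix (Fin d) (Fin K) ℝ)
    (H : Matrix (Fin K) (Fin d) ℝ) : 0 ≤ fobj X L μ W H := by
  have hpsd : (Xᵀ * L * X).PosSemidef := by
    have := hL.conjTranspose_mul_mul_same X
    rwa [Matrix.conjTranspose_eq_transpose_of_trivial] at this
  have h1 : Wᵀ * Xᵀ * L * X * W = Wᵀ * (Xᵀ * L * X) * W := by
    simp only [Matrix.mul_assoc]
  have h2 : 0 ≤ Matrix.trace (Wᵀ * Xᵀ * L * X * W) := by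
    rw [h1]; exact trace_quad_nonneg hpsd W
  have h3 := frobSq_nonneg (X - X * W * H)
  rw [fobj]
  positivity

lemma gbeta_nonneg {d K : ℕ} {β : ℝ} (hβ : 0 ≤ β) (W : Matrix (Fin d) (Fin K) ℝ) :
    0 ≤ gbeta β W := by
  rw [gbeta]
  apply mul_nonneg hβ
  apply Finset.sum_nonneg
  intro i _
  exact Real.sqrt_nonneg _

lemma sqrt_sum_le_sum_sqrt {ι : Type*} (s : Finset ι) (f : ι → ℝ) (hf : ∀ i ∈ s, 0 ≤ f i) :
    Real.sqrt (∑ i ∈ s, f i) ≤ ∑ i ∈ s, Real.sqrt (f i) := by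
  classical
  induction s using Finset.induction with
  | empty => simp
  | @insert a s ha ih =>
    rw [Finset.sum_insert ha, Finset.sum_insert ha]
    have hfa : 0 ≤ f a := hf a (Finset.mem_insert_self a s)
    have hfs : 0 ≤ ∑ i ∈ s, f i :=
      Finset.sum_nonneg fun i hi => hf i (Finset.mem_insert_of_mem hi)
    have step : Real.sqrt (f a + ∑ i ∈ s, f i)
        ≤ Real.sqrt (f a) + Real.sqrt (∑ i ∈ s, f i) := by
      have h1 : f a + ∑ i ∈ s, f i
          ≤ (Real.sqrt (f a) + Real.sqrt (∑ i ∈ s, f i)) ^ 2 := by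
        have e1 := Real.sq_sqrt hfa
        have e2 := Real.sq_sqrt hfs
        nlinarith [Real.sqrt_nonneg (f a), Real.sqrt_nonneg (∑ i ∈ s, f i)]
      calc Real.sqrt (f a + ∑ i ∈ s, f i)
          ≤ Real.sqrt ((Real.sqrt (f a) + Real.sqrt (∑ i ∈ s, f i)) ^ 2) :=
            Real.sqrt_le_sqrt h1
        _ = _ := Real.sqrt_sq (by positivity)
    exact step.trans (add_le_add_right (ih fun i hi => hf i (Finset.mem_insert_of_mem hi)) _)

end Helpers

/-- along the GLoSS block coordinate descent iterations (without
extrapolation), the sequence `{W^k}` is bounded (in the Frobenius norm); in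
particular `g_β(W^k) = β Σᵢ ‖W^k_{i·}‖₂ ≤ f(W⁰,H⁰) + g_β(W⁰)` for every `k`. -/
theorem gloss_iterates_bounded (n d K : ℕ)
    (X : Matrix (Fin n) (Fin d) ℝ) (L : Matrix (Fin n) (Fin n) ℝ)
    (hL : L.PosSemidef) (μ : ℝ) (hμ : 0 < μ) (hXLX : Xᵀ * L * X ≠ 0)
    (β : ℝ) (hβ : 0 < β)
    (W : ℕ → Matrix (Fin d) (Fin K) ℝ) (H : ℕ → Matrix (Fin K) (Fin d) ℝ)
    (hWnn : ∀ k, ∀ i j, 0 ≤ W k i j)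
    (hWmin : ∀ k, ∀ W' : Matrix (Fin d) (Fin K) ℝ, (∀ i j, 0 ≤ W' i j) →
      Qsurr X L μ β (W k) (H k) (W (k + 1)) ≤ Qsurr X L μ β (W k) (H k) W')
    (hHmin : ∀ k, ∀ H' : Matrix (Fin K) (Fin d) ℝ,
      fobj X L μ (W (k + 1)) (H (k + 1)) ≤ fobj X L μ (W (k + 1)) H') :
    (∃ C : ℝ, ∀ k, frobNorm (W k) ≤ C) ∧
    (∀ k, gbeta β (W k) ≤ fobj X L μ (W 0) (H 0) + gbeta β (W 0)) := by
  have hLs : Lᵀ = L := by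
    have := hL.isHermitian
    rwa [Matrix.IsHermitian, Matrix.conjTranspose_eq_transpose_of_trivial] at this
  -- objective value is nonincreasing
  have key : ∀ k, fobj X L μ (W (k+1)) (H (k+1)) + gbeta β (W (k+1))
      ≤ fobj X L μ (W k) (H k) + gbeta β (W k) := by
    intro k
    have hq := hWmin k (W k) (hWnn k)
    have hqk : Qsurr X L μ β (W k) (H k) (W k) = gbeta β (W k) := by
      simp [Qsurr, frobSq]
    have hdes := descent_lemma X L hLs hμ.le (W k) (W (k+1)) (H k)
    have hH := hHmin k (H k)
    have hexp : Qsurr X L μ β (W k) (H k) (W (k+1))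
        = Matrix.trace ((Gmat X L μ (W k) (H k))ᵀ * (W (k+1) - W k))
          + (Lw X L μ (H k) / 2) * frobSq (W (k+1) - W k) + gbeta β (W (k+1)) := rfl
    rw [hqk, hexp] at hq
    linarith
  have mono : ∀ k, fobj X L μ (W k) (H k) + gbeta β (W k)
      ≤ fobj X L μ (W 0) (H 0) + gbeta β (W 0) := by
    intro k
    induction k with
    | zero => exact le_refl _
    | succ k ih => exact (key k).trans ih
  have hg : ∀ k, gbeta β (W k) ≤ fobj X L μ (W 0) (H 0) + gbeta β (W 0) := by
    intro k
    have := fobj_nonneg X hL hμ.le (W k) (H k)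
    linarith [mono k]
  refine ⟨⟨(fobj X L μ (W 0) (H 0) + gbeta β (W 0)) / β, fun k => ?_⟩, hg⟩
  have h1 : frobNorm (W k) ≤ ∑ i, Real.sqrt (∑ j, (W k i j) ^ 2) := by
    rw [frobNorm, frobSq]
    exact sqrt_sum_le_sum_sqrt _ _ (fun i _ => by positivity)
  have h2 : β * frobNorm (W k) ≤ gbeta β (W k) := by
    rw [gbeta]
    exact mul_le_mul_of_nonneg_left h1 hβ.le
  rw [le_div_iff₀ hβ] at *
  have := hg k
  nlinarith [h2]
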